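/- If A ∈ ℂ^{N×N} is invertible and M ∈ {0,1}^{N×N} has at least one generalized diagonal of ones (i.e., there exists a permutation σ of {1,…,N} with M_{k,σ(k)} = 1 for all k), then there exists a permutation ρ of {1,…,N} such that A ⊙ (P_ρ M) is invertible, i.e., some row permutation of M yields a mask under which A stays invertible. -/
import Mathlib


noncomputable section

/-- The permutation matrix `P_ρ` with `(P_ρ)_{k,ℓ} = 1` iff `ℓ = ρ(k)`, so that the
`k`-th row of `P_ρ * M` is the `ρ(k)`-th row of `M`. -/
def permMat {N : ℕ} (ρ : Equiv.Perm (Fin N)) : Matrix (Fin N) (Fin N) ℂ :=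
  Matrix.of fun k l => if l = ρ k then 1 else 0

/-- If `A ∈ ℂ^{N×N}` is invertible and the binary matrix
`M ∈ {0,1}^{N×N}` has a generalized diagonal of ones, then there is a permutation `ρ`
such that `A ⊙ (P_ρ M)` is invertible: some row permutation of `M` yields a mask under
which `A` stays invertible. -/
theorem stmt_5 (N : ℕ) (A M : Matrix (Fin N) (Fin N) ℂ)
    (hA : IsUnit A)
    (hM : ∀ k l, M k l = 0 ∨ M k l = 1)
    (hdiag : ∃ σ : Equiv.Perm (Fin N), ∀ k, M k (σ k) = 1) :
    ∃ ρ : Equiv.Perm (Fin N), IsUnit (Matrix.hadamard A (permMat ρ * M)) := by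
  classical
  obtain ⟨σ, hσ⟩ := hdiag
  have hentry : ∀ (ρ : Equiv.Perm (Fin N)) (k l : Fin N),
      Matrix.hadamard A (permMat ρ * M) k l = A k l * M (ρ k) l := by
    intro ρ k l
    simp [Matrix.hadamard, permMat, Matrix.mul_apply, Finset.sum_ite_eq]
  set S : ℂ := ∑ μ : Equiv.Perm (Fin N), ∏ i, M (μ i) i with hSdef
  have hSne : S ≠ 0 := by
    have hterm : ∀ μ : Equiv.Perm (Fin N),
        (∏ i, M (μ i) i) = if ∀ i, M (μ i) i = 1 then 1 else 0 := by
      intro μ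
      by_cases h : ∀ i, M (μ i) i = 1
      · simp [h]
      · push_neg at h
        obtain ⟨i, hi⟩ := h
        rw [if_neg]
        · exact Finset.prod_eq_zero (Finset.mem_univ i) ((hM (μ i) i).resolve_right hi)
        · push_neg; exact ⟨i, hi⟩
    rw [hSdef]
    simp only [hterm]
    rw [Finset.sum_boole]
    have hmem : σ⁻¹ ∈ Finset.univ.filter
        (fun μ : Equiv.Perm (Fin N) => ∀ i, M (μ i) i = 1) := by
      simp only [Finset.mem_filter, Finset.mem_univ, true_and]
      intro i
      simpa using hσ (σ⁻¹ i)
    have hcard : 0 < (Finset.univ.filter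
        (fun μ : Equiv.Perm (Fin N) => ∀ i, M (μ i) i = 1)).card :=
      Finset.card_pos.2 ⟨_, hmem⟩
    exact_mod_cast Nat.cast_ne_zero.2 hcard.ne'
  have key : ∑ ρ : Equiv.Perm (Fin N), (Matrix.hadamard A (permMat ρ * M)).det
      = S * A.det := by
    have hdet : ∀ ρ : Equiv.Perm (Fin N),
        (Matrix.hadamard A (permMat ρ * M)).det
          = ∑ π : Equiv.Perm (Fin N),
              (Equiv.Perm.sign π : ℂ) * ((∏ i, A (π i) i) * ∏ i, M ((ρ * π) i) i) := by
      intro ρ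
      rw [Matrix.det_apply']
      refine Finset.sum_congr rfl fun π _ => ?_
      congr 1
      rw [← Finset.prod_mul_distrib]
      refine Finset.prod_congr rfl fun i _ => ?_
      rw [hentry, Equiv.Perm.mul_apply]
    simp only [hdet]
    rw [Finset.sum_comm]
    have hinner : ∀ π : Equiv.Perm (Fin N),
        ∑ ρ : Equiv.Perm (Fin N),
          (Equiv.Perm.sign π : ℂ) * ((∏ i, A (π i) i) * ∏ i, M ((ρ * π) i) i)
        = (Equiv.Perm.sign π : ℂ) * ((∏ i, A (π i) i) * S) := by
      intro π
      rw [← Finset.mul_sum, ← Finset.mul_sum]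
      congr 2
      exact Equiv.sum_comp (Equiv.mulRight π) (fun μ => ∏ i, M (μ i) i)
    simp only [hinner]
    rw [Matrix.det_apply', Finset.mul_sum]
    refine Finset.sum_congr rfl fun π _ => ?_
    ring
  have hdetA : A.det ≠ 0 := ((Matrix.isUnit_iff_isUnit_det A).1 hA).ne_zero
  have hex : ∃ ρ : Equiv.Perm (Fin N), (Matrix.hadamard A (permMat ρ * M)).det ≠ 0 := by
    by_contra h
    push_neg at h
    have h0 : ∑ ρ : Equiv.Perm (Fin N), (Matrix.hadamard A (permMat ρ * M)).det = 0 :=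
      Finset.sum_eq_zero fun ρ _ => h ρ
    rw [key] at h0
    exact mul_ne_zero hSne hdetA h0
  obtain ⟨ρ, hρ⟩ := hex
  exact ⟨ρ, (Matrix.isUnit_iff_isUnit_det _).2 (isUnit_iff_ne_zero.2 hρ)⟩
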